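/- Let i₀ ∈ D₁, j₀ ∈ D₂ with η = ε_{i₀,j₀}, and let W ∈ 𝒲 satisfy ε_W = ε_{i₀,j₀} · w_w. Then w_{i₀} = (a_{i₀w} + ε_{i₀,j₀}) · w_w, w_{j₀} = (a_{j₀w} − ε_{i₀,j₀}) · w_w, and w_b = (a_{bi₀}·a_{i₀w} + (a_{bi₀}+1)·ε_{i₀,j₀}) · w_w = (a_{bj₀}·a_{j₀w} − (a_{bj₀}+1)·ε_{i₀,j₀}) · w_w. -/

import Mathlib

open Finset

noncomputable def epsW (D : Finset ℕ) (hD : D.Nonempty) (b w : ℕ)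
    (ab aw : ℕ → ℝ) (abw : ℝ) (v : ℕ → ℝ) : ℝ :=
  D.sup' hD fun i =>
    max |v b - ab i * v i| (max |v i - aw i * v w| |v b - abw * v w|)

noncomputable def epsi (ab aw : ℕ → ℝ) (abw : ℝ) (i : ℕ) : ℝ :=
  |ab i * aw i - abw| / (ab i + 2)

noncomputable def epsij (ab aw : ℕ → ℝ) (i j : ℕ) : ℝ :=
  |ab i * aw i - ab j * aw j| / (ab i + ab j + 2)

noncomputable def eta (D : Finset ℕ) (hD : D.Nonempty) (ab aw : ℕ → ℝ) (abw : ℝ) : ℝ :=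
  (D ×ˢ D).sup' (hD.product hD) fun p =>
    max (epsi ab aw abw p.1) (epsij ab aw p.1 p.2)

/-- if η = ε_{i₀,j₀} with i₀ ∈ D₁, j₀ ∈ D₂ and ε_W = ε_{i₀,j₀}·w_w, then the
weights of b, i₀ and j₀ are determined as stated. -/
theorem stmt10 (n b w : ℕ) (hn : 4 ≤ n) (hb : b ∈ Icc 1 n) (hw : w ∈ Icc 1 n) (hbw : b ≠ w)
    (ab aw : ℕ → ℝ) (abw : ℝ)
    (hab : ∀ i ∈ Icc 1 n \ {b, w}, 0 < ab i) (haw : ∀ i ∈ Icc 1 n \ {b, w}, 0 < aw i)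
    (habw : 0 < abw)
    (hD : (Icc 1 n \ {b, w}).Nonempty)
    (i0 j0 : ℕ) (hi0 : i0 ∈ Icc 1 n \ {b, w}) (hj0 : j0 ∈ Icc 1 n \ {b, w})
    (hi0D1 : ab i0 * aw i0 < abw) (hj0D2 : abw < ab j0 * aw j0)
    (heta : eta (Icc 1 n \ {b, w}) hD ab aw abw = epsij ab aw i0 j0)
    (v : ℕ → ℝ) (hv0 : ∀ i ∈ Icc 1 n, 0 ≤ v i) (hv1 : (∑ i ∈ Icc 1 n, v i) = 1)
    (hW : epsW (Icc 1 n \ {b, w}) hD b w ab aw abw v = epsij ab aw i0 j0 * v w) :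
    v i0 = (aw i0 + epsij ab aw i0 j0) * v w ∧
    v j0 = (aw j0 - epsij ab aw i0 j0) * v w ∧
    v b = (ab i0 * aw i0 + (ab i0 + 1) * epsij ab aw i0 j0) * v w ∧
    v b = (ab j0 * aw j0 - (ab j0 + 1) * epsij ab aw i0 j0) * v w := by

  set D := Icc 1 n \ {b, w} with hDdef
  set e := epsij ab aw i0 j0 with he
  have habi : 0 < ab i0 := hab i0 hi0
  have habj : 0 < ab j0 := hab j0 hj0
  have hden : 0 < ab i0 + ab j0 + 2 := by linarith
  have heval : e * (ab i0 + ab j0 + 2) = ab j0 * aw j0 - ab i0 * aw i0 := by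
    rw [he, epsij, abs_of_neg (by linarith : ab i0 * aw i0 - ab j0 * aw j0 < 0)]
    field_simp
    ring
  have key : ∀ i ∈ D, |v b - ab i * v i| ≤ e * v w ∧ |v i - aw i * v w| ≤ e * v w ∧
      |v b - abw * v w| ≤ e * v w := by
    intro i hi
    have h := Finset.le_sup' (fun i =>
      max |v b - ab i * v i| (max |v i - aw i * v w| |v b - abw * v w|)) hi
    replace h : _ ≤ e * v w := h.trans_eq hW
    simp only [max_le_iff] at h
    exact ⟨h.1, h.2.1, h.2.2⟩
  have hvw0 : 0 ≤ v w := hv0 w hw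
  have hsub : {b, w} ⊆ Icc 1 n := by
    intro x hx; simp at hx; rcases hx with h | h <;> subst h <;> assumption
  have hsplit : ∑ i ∈ D, v i + (v b + v w) = 1 := by
    rw [← hv1, ← Finset.sum_pair hbw]
    exact Finset.sum_sdiff hsub
  have hvw : 0 < v w := by
    rcases lt_or_eq_of_le hvw0 with h | h
    · exact h
    have hz : v w = 0 := h.symm
    have hzb : v b = 0 := by
      have := (key i0 hi0).2.2
      rw [hz] at this
      simp at this
      nlinarith [abs_nonneg (v b - abw * 0), abs_sub_abs_le_abs_sub (v b) (abw * 0),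
        abs_of_nonneg (hv0 b hb)]
    have hzi : ∀ i ∈ D, v i = 0 := by
      intro i hi
      have := (key i hi).2.1
      rw [hz] at this
      simp at this
      have hnn : 0 ≤ v i := hv0 i (Finset.mem_sdiff.mp hi).1
      nlinarith [abs_of_nonneg hnn]
    rw [Finset.sum_eq_zero hzi, hzb, hz] at hsplit
    norm_num at hsplit
  have hA := abs_le.mp (key i0 hi0).1
  have hB := abs_le.mp (key i0 hi0).2.1
  have hA' := abs_le.mp (key j0 hj0).1
  have hB' := abs_le.mp (key j0 hj0).2.1
  have hmB := mul_le_mul_of_nonneg_left hB.2 habi.le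
  have hmB'2 : ab j0 * (aw j0 * v w - e * v w) ≤ ab j0 * v j0 :=
    mul_le_mul_of_nonneg_left (by linarith [hB'.1]) habj.le
  have hEq := congrArg (fun x => x * v w) heval
  -- tight bounds
  have hti : ab i0 * v i0 = ab i0 * ((aw i0 + e) * v w) := by linarith [hA.2, hA'.1, hmB, hmB'2, hEq]
  have htj : ab j0 * v j0 = ab j0 * ((aw j0 - e) * v w) := by linarith [hA.2, hA'.1, hmB, hmB'2, hEq]
  have hg1 : v i0 = (aw i0 + e) * v w := mul_left_cancel₀ habi.ne' hti
  have hg2 : v j0 = (aw j0 - e) * v w := mul_left_cancel₀ habj.ne' htj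
  refine ⟨hg1, hg2, by linarith [hA.2, hA'.1, hmB, hmB'2, hEq], by linarith [hA.2, hA'.1, hmB, hmB'2, hEq]⟩
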